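/- Fix ε > 0, m ≥ 0. For all (x,t) ∈ εℤ² with |x| < t and (x+t)/ε even: a1(x,t,m,ε) = (1+m²ε²)^{(1−t/ε)/2} · Σ_{r=0}^{(t−|x|)/(2ε)} (−1)^r · C((x+t)/(2ε)−1, r) · C((t−x)/(2ε)−1, r) · (mε)^{2r+1}, and a2(x,t,m,ε) = (1+m²ε²)^{(1−t/ε)/2} · Σ_{r=1}^{(t−|x|)/(2ε)} (−1)^r · C((x+t)/(2ε)−1, r) · C((t−x)/(2ε)−1, r−1) · (mε)^{2r}. -/

import Mathlib

open scoped BigOperators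

noncomputable section

/-- Endpoint `x`-coordinate of a checker path of `n` steps encoded by step directions:
`true` = step `(1,1)`, `false` = step `(-1,1)`. -/
def endpt {n : ℕ} (d : Fin n → Bool) : ℤ :=
  ∑ i, (if d i then (1 : ℤ) else -1)

/-- The number of turns of a checker path encoded by step directions. -/
def turns {n : ℕ} (d : Fin n → Bool) : ℕ :=
  ((Finset.range n).filter fun i =>
    ∃ h : i + 1 < n, d ⟨i, Nat.lt_of_succ_lt h⟩ ≠ d ⟨i + 1, h⟩).card

/-- Checker paths from `(0,0)` to `(x,n)` with the first step to `(1,1)`,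
encoded by their step directions. -/
def pathsTo (x : ℤ) (n : ℕ) : Finset (Fin n → Bool) :=
  Finset.univ.filter fun d => (∃ h : 0 < n, d ⟨0, h⟩ = true) ∧ endpt d = x

/-- Feynman checkers with mass `m` and lattice step `ε`: the value `a(εx, εt, m, ε)`,
where `x t : ℤ` are the coordinates in units of `ε`. -/
def am (x t : ℤ) (m ε : ℝ) : ℂ :=
  (1 + m ^ 2 * ε ^ 2 : ℂ) ^ ((1 - (t : ℂ)) / 2) * Complex.I *
    ∑ d ∈ pathsTo x t.toNat, (-Complex.I * (m * ε)) ^ turns d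

/-- The basic model: `a(x,t)`. -/
def a (x t : ℤ) : ℂ :=
  (2 : ℂ) ^ ((1 - (t : ℂ)) / 2) * Complex.I *
    ∑ d ∈ pathsTo x t.toNat, (-Complex.I) ^ turns d

/-- Binomial coefficient with integer arguments, set to 0 if k < 0 or k > n. -/
def intChoose (n k : ℤ) : ℝ :=
  if 0 ≤ k ∧ k ≤ n then (n.toNat.choose k.toNat : ℝ) else 0

/-- number of compositions of `m` into `j` positive parts -/
def Ccomp (m j : ℕ) : ℕ :=
  if j = 0 then (if m = 0 then 1 else 0)
  else if m = 0 then 0 else (m - 1).choose (j - 1)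


lemma Ccomp_zero_right (m : ℕ) : Ccomp m 0 = if m = 0 then 1 else 0 := by
  unfold Ccomp; simp

lemma Ccomp_one_right (m : ℕ) : Ccomp m 1 = if m = 0 then 0 else 1 := by
  unfold Ccomp; split_ifs <;> simp_all

lemma Ccomp_zero_left' (j : ℕ) : Ccomp 0 j = if j = 0 then 1 else 0 := by
  unfold Ccomp; split_ifs <;> simp_all

lemma Ccomp_one (j : ℕ) : Ccomp 1 j = if j = 1 then 1 else 0 := by
  rcases j with _ | j
  · simp [Ccomp]
  · rcases j with _ | j
    · simp [Ccomp]
    · simp [Ccomp, Nat.choose_eq_zero_of_lt (show 0 < j + 1 by omega)]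

lemma Ccomp_pascal (m j : ℕ) (hm : 1 ≤ m) (hj : 1 ≤ j) :
    Ccomp m j = Ccomp (m - 1) j + Ccomp (m - 1) (j - 1) := by
  rcases j with _ | j
  · omega
  rcases j with _ | j
  · rw [Ccomp_one_right, Ccomp_one_right, Ccomp_zero_right]
    split_ifs <;> omega
  rcases Nat.lt_or_ge m 2 with h | h
  · interval_cases m
    simp [Ccomp_one, Ccomp_zero_left']
  · have hm1 : ¬ m = 0 := by omega
    have hm2 : ¬ m - 1 = 0 := by omega
    unfold Ccomp
    simp only [if_neg (show ¬ (j+2) = 0 by omega), if_neg (show ¬ (j+1+1-1) = 0 by omega),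
      if_neg hm1, if_neg hm2]
    have h3 : m - 1 - 1 = m - 2 := by omega
    have h4 : j + 2 - 1 = j + 1 := by omega
    have h5 : j + 1 - 1 = j := by omega
    have h1 : m - 1 = (m - 2) + 1 := by omega
    rw [h3, h4, h5, h1, Nat.choose_succ_succ]
    simp only [Nat.succ_eq_add_one]
    omega

lemma Ccomp_zero_left {j : ℕ} (hj : 1 ≤ j) : Ccomp 0 j = 0 := by
  simp [Ccomp]; omega

lemma Ccomp_eq_choose {m : ℕ} (hm : 1 ≤ m) (j : ℕ) : Ccomp m (j + 1) = (m - 1).choose j := by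
  simp [Ccomp]; omega

lemma turns_le {n : ℕ} (d : Fin (n + 1) → Bool) : turns d ≤ n := by
  unfold turns
  calc ((Finset.range (n+1)).filter _).card ≤ (Finset.range n).card := by
        apply Finset.card_le_card
        intro i hi
        simp only [Finset.mem_filter, Finset.mem_range] at hi ⊢
        obtain ⟨h, -⟩ := hi.2
        omega
    _ = n := Finset.card_range n

lemma endpt_abs_le {n : ℕ} (d : Fin n → Bool) : |endpt d| ≤ n := by
  unfold endpt
  calc |∑ i, (if d i then (1:ℤ) else -1)| ≤ ∑ i : Fin n, |if d i then (1:ℤ) else -1| :=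
        Finset.abs_sum_le_sum_abs _ _
    _ ≤ ∑ _i : Fin n, 1 := by
        apply Finset.sum_le_sum
        intro i _
        split_ifs <;> simp
    _ = n := by simp

lemma endpt_cons {n : ℕ} (c : Bool) (d : Fin n → Bool) :
    endpt (Fin.cons c d) = (if c then 1 else -1) + endpt d := by
  unfold endpt
  rw [Fin.sum_univ_succ]
  simp [Fin.cons_succ]

lemma turns_cons {n : ℕ} (c : Bool) (d : Fin (n + 1) → Bool) :
    turns (Fin.cons c d : Fin (n + 2) → Bool) = (if c = d 0 then 0 else 1) + turns d := by
  unfold turns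
  rw [Finset.card_filter, Finset.card_filter, Finset.sum_range_succ' _ (n + 1)]
  have h0 : (if (∃ h : 0 + 1 < n + 2,
      (Fin.cons c d : Fin (n+2) → Bool) ⟨0, Nat.lt_of_succ_lt h⟩ ≠ (Fin.cons c d : Fin (n+2) → Bool) ⟨0 + 1, h⟩)
      then 1 else 0) = (if c = d 0 then 0 else 1) := by
    have e1 : (Fin.cons c d : Fin (n+2) → Bool) ⟨0, by omega⟩ = c := rfl
    have e2 : (Fin.cons c d : Fin (n+2) → Bool) ⟨0 + 1, by omega⟩ = d 0 := rfl
    by_cases hcd : c = d 0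
    · rw [if_neg, if_pos hcd]
      push_neg
      intro h
      rw [e1, e2]; exact hcd
    · rw [if_pos, if_neg hcd]
      exact ⟨by omega, by rw [e1, e2]; exact hcd⟩
  rw [h0]
  rw [add_comm]
  congr 1
  apply Finset.sum_congr rfl
  intro i hi
  simp only [Finset.mem_range] at hi
  congr 1
  apply propext
  constructor
  · rintro ⟨h, hne⟩
    refine ⟨by omega, ?_⟩
    have e1 : (Fin.cons c d : Fin (n+2) → Bool) ⟨i + 1, by omega⟩ = d ⟨i, by omega⟩ := rfl
    have e2 : (Fin.cons c d : Fin (n+2) → Bool) ⟨i + 1 + 1, by omega⟩ = d ⟨i + 1, by omega⟩ := rfl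
    rw [e1, e2] at hne
    convert hne using 2
  · rintro ⟨h, hne⟩
    refine ⟨by omega, ?_⟩
    have e1 : (Fin.cons c d : Fin (n+2) → Bool) ⟨i + 1, by omega⟩ = d ⟨i, by omega⟩ := rfl
    have e2 : (Fin.cons c d : Fin (n+2) → Bool) ⟨i + 1 + 1, by omega⟩ = d ⟨i + 1, by omega⟩ := rfl
    rw [e1, e2]
    convert hne using 2

/-- number of paths of length `n+1` from 0 to `x` with first step `b1`, last step `b2`,
and `k` turns -/
def cnt (n : ℕ) (x : ℤ) (b1 b2 : Bool) (k : ℕ) : ℕ :=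
  ∑ d : Fin (n + 1) → Bool,
    if d 0 = b1 ∧ d (Fin.last n) = b2 ∧ endpt d = x ∧ turns d = k then 1 else 0

lemma cnt_eq_zero {n : ℕ} {x : ℤ} (hx : (n + 1 : ℤ) < |x|) (b1 b2 : Bool) (k : ℕ) :
    cnt n x b1 b2 k = 0 := by
  apply Finset.sum_eq_zero
  intro d _
  rw [if_neg]
  rintro ⟨-, -, hend, -⟩
  have := endpt_abs_le d
  rw [hend] at this
  push_cast at this
  omega




lemma indicator_split (b1 a : Bool) (L E E' : Prop) [Decidable L] [Decidable E] [Decidable E']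
    (hEE : E' ↔ E) (t k : ℕ) :
    (if (L ∧ E' ∧ (if b1 = a then 0 else 1) + t = k) then (1:ℕ) else 0)
      = (if (a = b1 ∧ L ∧ E ∧ t = k) then 1 else 0) +
        (if k = 0 then (0:ℕ) else if (a = (!b1) ∧ L ∧ E ∧ t = k - 1) then 1 else 0) := by
  simp only [hEE]
  by_cases hL : L <;> by_cases hE : E <;> cases b1 <;> cases a <;>
    simp [hL, hE] <;> split_ifs <;> omega

lemma cnt_succ (n : ℕ) (x : ℤ) (b1 b2 : Bool) (k : ℕ) :
    cnt (n + 1) x b1 b2 k =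
      cnt n (x - (if b1 then 1 else -1)) b1 b2 k +
        (if k = 0 then 0 else cnt n (x - (if b1 then 1 else -1)) (!b1) b2 (k - 1)) := by
  classical
  set A : (Fin (n+1) → Bool) → ℕ := fun d =>
    if d 0 = b1 ∧ d (Fin.last n) = b2 ∧
        endpt d = x - (if b1 then 1 else -1) ∧ turns d = k then 1 else 0 with hA
  set B : (Fin (n+1) → Bool) → ℕ := fun d =>
    if k = 0 then (0:ℕ) else
      if d 0 = (!b1) ∧ d (Fin.last n) = b2 ∧
          endpt d = x - (if b1 then 1 else -1) ∧ turns d = (k-1) then 1 else 0 with hB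
  set F : (Fin (n+2) → Bool) → ℕ := fun d =>
    if d 0 = b1 ∧ d (Fin.last (n+1)) = b2 ∧ endpt d = x ∧ turns d = k then 1 else 0 with hF
  have key : cnt (n + 1) x b1 b2 k = ∑ p : Bool × (Fin (n + 1) → Bool), F (Fin.cons p.1 p.2) :=
    (Fintype.sum_equiv (Fin.consEquiv (fun _ : Fin (n+2) => Bool))
      (fun p : Bool × (Fin (n+1) → Bool) => F (Fin.cons p.1 p.2)) F (fun p => rfl)).symm
  have hlast : ∀ (c : Bool) (d : Fin (n+1) → Bool),
      (Fin.cons c d : Fin (n+2) → Bool) (Fin.last (n+1)) = d (Fin.last n) := by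
    intro c d
    rw [← Fin.succ_last, Fin.cons_succ]
  have step : (∑ p : Bool × (Fin (n + 1) → Bool), F (Fin.cons p.1 p.2))
      = ∑ p : Bool × (Fin (n + 1) → Bool), (if p.1 = b1 then A p.2 + B p.2 else 0) := by
    apply Finset.sum_congr rfl
    rintro ⟨c, y⟩ -
    show F (Fin.cons c y) = if c = b1 then A y + B y else 0
    by_cases hc : c = b1
    · subst hc
      rw [if_pos rfl, hF]
      simp only []
      have hz : (Fin.cons c y : Fin (n+2) → Bool) 0 = c := rfl
      simp only [hz, hlast, endpt_cons, turns_cons, eq_self_iff_true, true_and]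
      have hiff : ((if c then (1:ℤ) else -1) + endpt y = x) ↔
          (endpt y = x - (if c then 1 else -1)) := by
        constructor <;> intro h <;> omega
      exact indicator_split c (y 0) (y (Fin.last n) = b2)
        (endpt y = x - (if c then 1 else -1)) ((if c then (1:ℤ) else -1) + endpt y = x)
        hiff (turns y) k
    · rw [if_neg hc, hF]
      simp only []
      rw [if_neg]
      rintro ⟨h, -⟩
      exact hc h
  rw [key, step, Fintype.sum_prod_type, Fintype.sum_bool]
  have hAB : (∑ y, (A y + B y)) = (∑ y, A y) + ∑ y, B y := Finset.sum_add_distrib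
  have hBsum : (∑ y, B y) = if k = 0 then 0 else
      cnt n (x - (if b1 then 1 else -1)) (!b1) b2 (k - 1) := by
    rw [hB]
    by_cases hk : k = 0
    · simp [hk]
    · simp only [if_neg hk]
      rfl
  have hAsum : (∑ y, A y) = cnt n (x - (if b1 then 1 else -1)) b1 b2 k := rfl
  cases b1 <;>
    simp only [Bool.true_eq_false, Bool.false_eq_true, if_true, if_false, ite_true, ite_false,
      Finset.sum_const_zero, zero_add, add_zero, hAB, hBsum, hAsum] <;>
    simp [hAB, hBsum, ← hAsum]

/-- closed form for `cnt` -/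
def Fc (p q : ℕ) (b1 b2 : Bool) (k : ℕ) : ℕ :=
  if (b1 = b2) ↔ (k % 2 = 0) then
    Ccomp (if b1 then p else q) (k / 2 + 1) * Ccomp (if b1 then q else p) ((k + 1) / 2)
  else 0

lemma Fc_swap (p q : ℕ) (b1 b2 : Bool) (k : ℕ) : Fc p q b1 b2 k = Fc q p (!b1) (!b2) k := by
  cases b1 <;> cases b2 <;> simp [Fc]

lemma Fc_rec_true (p q : ℕ) (hp : 1 ≤ p) (hpq : 2 ≤ p + q) (b2 : Bool) (k : ℕ) :
    Fc p q true b2 k =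
      Fc (p - 1) q true b2 k + (if k = 0 then 0 else Fc (p - 1) q false b2 (k - 1)) := by
  by_cases hk : k = 0
  · subst hk
    cases b2
    · simp [Fc]
    · simp only [Fc]
      simp only [show ((true:Bool) = true ↔ 0 % 2 = 0) from by simp, if_pos, if_true]
      simp only [show (0:ℕ)/2 + 1 = 1 from rfl, show ((0:ℕ)+1)/2 = 0 from rfl, add_zero]
      rcases Nat.eq_zero_or_pos q with hq | hq
      · subst hq
        rw [Ccomp_eq_choose hp, Ccomp_eq_choose (by omega : 1 ≤ p - 1)]
        simp [Ccomp_zero_right]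
      · rw [Ccomp_zero_right q, if_neg (by omega)]
        ring
  · -- k ≥ 1
    rw [if_neg hk]
    have hpar : ∀ (b2 : Bool), ((false : Bool) = b2 ↔ (k-1) % 2 = 0) ↔ ((true : Bool) = b2 ↔ k % 2 = 0) := by
      intro b2; cases b2 <;> simp <;> omega
    by_cases hcond : (true : Bool) = b2 ↔ k % 2 = 0
    · simp only [Fc, if_pos hcond, if_pos ((hpar b2).mpr hcond), if_true,
        Bool.false_eq_true, if_false]
      have e1 : (k - 1) / 2 + 1 = (k + 1) / 2 := by omega
      have e2 : (k - 1 + 1) / 2 = k / 2 := by omega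
      rw [e1, e2]
      rw [Ccomp_pascal p (k/2 + 1) hp (by omega)]
      have e3 : k / 2 + 1 - 1 = k / 2 := by omega
      rw [e3]
      ring
    · simp only [Fc, if_neg hcond, if_neg (fun h => hcond ((hpar b2).mp h))]

lemma Fc_rec_false (p q : ℕ) (hq : 1 ≤ q) (hpq : 2 ≤ p + q) (b2 : Bool) (k : ℕ) :
    Fc p q false b2 k =
      Fc p (q - 1) false b2 k + (if k = 0 then 0 else Fc p (q - 1) true b2 (k - 1)) := by
  rw [Fc_swap p q false b2 k, Fc_swap p (q-1) false b2 k, Fc_swap p (q-1) true b2 (k-1)]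
  simp only [Bool.not_false, Bool.not_true]
  exact Fc_rec_true q p hq (by omega) (!b2) k

lemma cnt_zero (p q : ℕ) (hpq : p + q = 1) (b1 b2 : Bool) (k : ℕ) :
    cnt 0 ((p:ℤ) - q) b1 b2 k = Fc p q b1 b2 k := by
  have hend : ∀ d : Fin 1 → Bool, endpt d = (if d 0 then 1 else -1) :=
    fun d => Fin.sum_univ_one _
  have hturn : ∀ d : Fin 1 → Bool, turns d = 0 :=
    fun d => Nat.le_zero.mp (turns_le _)
  have key : cnt 0 ((p:ℤ) - q) b1 b2 k
      = ∑ c : Bool, (if (c = b1 ∧ c = b2 ∧ (if c then (1:ℤ) else -1) = (p:ℤ) - q ∧ 0 = k)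
          then (1:ℕ) else 0) := by
    refine (Fintype.sum_equiv (Equiv.funUnique (Fin 1) Bool).symm _ _ (fun c => ?_)).symm
    simp [hend, hturn, Equiv.funUnique_symm_apply]
    exact if_congr Iff.rfl rfl rfl
  rw [key, Fintype.sum_bool]
  have hcase : (p = 1 ∧ q = 0) ∨ (p = 0 ∧ q = 1) := by omega
  rcases hcase with ⟨hp, hq⟩ | ⟨hp, hq⟩ <;> subst hp <;> subst hq <;>
    rcases k with _ | k <;> cases b1 <;> cases b2 <;>
    simp [Fc, Ccomp_one, Ccomp_zero_left', Ccomp_zero_right, Ccomp_one_right] <;>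
    split_ifs <;> omega

lemma cnt_closed : ∀ (n p q : ℕ), p + q = n + 1 → ∀ (b1 b2 : Bool) (k : ℕ),
    cnt n ((p:ℤ) - q) b1 b2 k = Fc p q b1 b2 k := by
  intro n
  induction n with
  | zero => exact fun p q h b1 b2 k => cnt_zero p q h b1 b2 k
  | succ n IH =>
    intro p q hpq b1 b2 k
    cases b1
    · -- b1 = false : strip a step to the left end, decreasing q
      rw [cnt_succ]
      simp only [Bool.false_eq_true, if_false, Bool.not_false]
      rcases Nat.eq_zero_or_pos q with hq | hq
      · subst hq
        have habs : ((n:ℤ) + 1) < |(p:ℤ) - ((0:ℕ):ℤ) - (-1)| := by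
          rw [abs_of_nonneg (by push_cast; omega)]
          push_cast
          omega
        rw [cnt_eq_zero habs, cnt_eq_zero habs]
        simp only [Fc, Bool.false_eq_true, if_false]
        rw [Ccomp_zero_left' (k/2 + 1)]
        simp
      · have hx : (p:ℤ) - q - (-1) = (p:ℤ) - ((q-1 : ℕ) : ℤ) := by push_cast; omega
        rw [hx, IH p (q-1) (by omega) false b2 k, IH p (q-1) (by omega) true b2 (k-1)]
        exact (Fc_rec_false p q hq (by omega) b2 k).symm
    · rw [cnt_succ]
      simp only [if_true, Bool.not_true]
      rcases Nat.eq_zero_or_pos p with hp | hp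
      · subst hp
        have habs : ((n:ℤ) + 1) < |((0:ℕ):ℤ) - (q:ℤ) - 1| := by
          rw [abs_of_nonpos (by push_cast; omega)]
          push_cast
          omega
        rw [cnt_eq_zero habs, cnt_eq_zero habs]
        simp only [Fc, if_true]
        rw [Ccomp_zero_left' (k/2 + 1)]
        simp
      · have hx : (p:ℤ) - q - 1 = ((p-1 : ℕ) : ℤ) - q := by push_cast; omega
        rw [hx, IH (p-1) q (by omega) true b2 k, IH (p-1) q (by omega) false b2 (k-1)]
        exact (Fc_rec_true p q hp (by omega) b2 k).symm

lemma sum_pathsTo (N : ℕ) (x : ℤ) (f : ℕ → ℂ) :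
    (∑ d ∈ pathsTo x (N+1), f (turns d))
      = ∑ k ∈ Finset.range (N+1),
          (((cnt N x true true k + cnt N x true false k : ℕ) : ℂ)) * f k := by
  have hrhs : ∀ k, (((cnt N x true true k + cnt N x true false k : ℕ) : ℂ)) * f k
      = ∑ d : Fin (N+1) → Bool,
          (((if d 0 = true ∧ d (Fin.last N) = true ∧ endpt d = x ∧ turns d = k then (1:ℂ) else 0)
          + (if d 0 = true ∧ d (Fin.last N) = false ∧ endpt d = x ∧ turns d = k
              then (1:ℂ) else 0))) * f k := by
    intro k
    rw [← Finset.sum_mul]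
    congr 1
    unfold cnt
    push_cast
    rw [← Finset.sum_add_distrib]
  rw [Finset.sum_congr rfl (fun k _ => hrhs k), Finset.sum_comm]
  unfold pathsTo
  rw [Finset.sum_filter]
  apply Finset.sum_congr rfl
  intro d _
  have hex : (∃ h : 0 < N + 1, d ⟨0, h⟩ = true) ↔ d 0 = true := by
    constructor
    · rintro ⟨h, hh⟩
      rwa [Fin.mk_zero] at hh
    · intro h
      exact ⟨N.succ_pos, by rwa [Fin.mk_zero]⟩
  have key : ∀ (g : ℕ → ℂ),
      (∑ k ∈ Finset.range (N+1), (if turns d = k then (1:ℂ) else 0) * g k) = g (turns d) := by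
    intro g
    rw [Finset.sum_eq_single (turns d)]
    · simp
    · intro k _ hk
      rw [if_neg (fun h => hk h.symm), zero_mul]
    · intro h
      exact absurd (Finset.mem_range.mpr (by have := turns_le d; omega)) h
  by_cases h0 : d 0 = true
  · by_cases hx : endpt d = x
    · rw [if_pos ⟨hex.mpr h0, hx⟩]
      cases hl : d (Fin.last N)
      · simp only [h0, hx, hl, eq_self_iff_true, true_and, Bool.false_eq_true, false_and,
          if_false, and_true, zero_add]
        exact (key f).symm
      · simp only [h0, hx, hl, eq_self_iff_true, true_and, Bool.true_eq_false, false_and,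
          if_false, and_true, add_zero]
        exact (key f).symm
    · rw [if_neg (fun hco => hx hco.2)]
      symm
      apply Finset.sum_eq_zero
      intro k _
      rw [if_neg (fun hc => hx hc.2.2.1), if_neg (fun hc => hx hc.2.2.1), add_zero, zero_mul]
  · rw [if_neg (fun hco => h0 (hex.mp hco.1))]
    symm
    apply Finset.sum_eq_zero
    intro k _
    rw [if_neg (fun hc => h0 hc.1), if_neg (fun hc => h0 hc.1), add_zero, zero_mul]

lemma Ccomp_eq_zero {a j : ℕ} (ha : 1 ≤ a) (h : a < j) : Ccomp a j = 0 := by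
  rcases j with _ | j
  · omega
  · rw [Ccomp_eq_choose ha]
    exact Nat.choose_eq_zero_of_lt (by omega)

lemma sum_range_two_mul {M : Type*} [AddCommMonoid M] (n : ℕ) (h : ℕ → M) :
    ∑ k ∈ Finset.range (2*n), h k
      = (∑ r ∈ Finset.range n, h (2*r)) + ∑ r ∈ Finset.range n, h (2*r+1) := by
  induction n with
  | zero => simp
  | succ n IH =>
    rw [show 2*(n+1) = 2*n + 1 + 1 by ring, Finset.sum_range_succ, Finset.sum_range_succ,
      Finset.sum_range_succ (fun r => h (2*r)) n, Finset.sum_range_succ (fun r => h (2*r+1)) n,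
      IH]
    abel

lemma intChoose' (n k : ℤ) : (if 0 ≤ k ∧ k ≤ n then ((n.toNat.choose k.toNat : ℕ) : ℝ) else 0)
    = (if 0 ≤ k ∧ k ≤ n then ((n.toNat.choose k.toNat : ℕ) : ℝ) else 0) := rfl

lemma intChoose_cast (a : ℕ) (ha : 1 ≤ a) (r : ℕ) :
    (if 0 ≤ (r:ℤ) ∧ (r:ℤ) ≤ (a:ℤ) - 1 then ((((a:ℤ)-1).toNat.choose ((r:ℤ)).toNat : ℕ) : ℝ) else 0)
      = (Ccomp a (r+1) : ℝ) := by
  rw [Ccomp_eq_choose ha]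
  split_ifs with h
  · have e1 : ((a:ℤ)-1).toNat = a - 1 := by omega
    have e2 : ((r:ℤ)).toNat = r := by omega
    rw [e1, e2]
  · rw [Nat.choose_eq_zero_of_lt (by omega)]
    simp

lemma intChoose_cast' (a : ℕ) (ha : 1 ≤ a) (r : ℕ) :
    (if 0 ≤ (r:ℤ) - 1 ∧ (r:ℤ) - 1 ≤ (a:ℤ) - 1
        then ((((a:ℤ)-1).toNat.choose (((r:ℤ)-1)).toNat : ℕ) : ℝ) else 0)
      = (Ccomp a r : ℝ) := by
  rcases r with _ | r
  · rw [if_neg (by omega), Ccomp_zero_right]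
    have : ¬ a = 0 := by omega
    simp [this]
  · have e0 : ((r+1 : ℕ):ℤ) - 1 = (r:ℤ) := by push_cast; ring
    rw [e0, Ccomp_eq_choose ha]
    split_ifs with h
    · have e1 : ((a:ℤ)-1).toNat = a - 1 := by omega
      have e2 : ((r:ℤ)).toNat = r := by omega
      rw [e1, e2]
    · rw [Nat.choose_eq_zero_of_lt (by omega)]
      simp

/-- "Explicit" formula for Feynman checkers with mass m and lattice step ε. -/
theorem explicit_formula_mass (m ε : ℝ) (hε : 0 < ε) (hm : 0 ≤ m) (x t : ℤ)
    (hx : |x| < t) (hpar : Even (x + t)) :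
    (am x t m ε).re = (1 + m ^ 2 * ε ^ 2) ^ (((1 : ℝ) - t) / 2) *
      ∑ r ∈ Finset.range (((t - |x|) / 2).toNat + 1),
        (-1 : ℝ) ^ r * intChoose ((x + t) / 2 - 1) r * intChoose ((t - x) / 2 - 1) r *
          (m * ε) ^ (2 * r + 1) ∧
    (am x t m ε).im = (1 + m ^ 2 * ε ^ 2) ^ (((1 : ℝ) - t) / 2) *
      ∑ r ∈ Finset.Icc 1 (((t - |x|) / 2).toNat),
        (-1 : ℝ) ^ r * intChoose ((x + t) / 2 - 1) r * intChoose ((t - x) / 2 - 1) ((r : ℤ) - 1) *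
          (m * ε) ^ (2 * r) := by
  classical
  have habs0 : 0 ≤ |x| := abs_nonneg x
  have habsc : |x| = x ∨ |x| = -x := abs_choice x
  have ht1 : (1:ℤ) ≤ t := by omega
  obtain ⟨c, hc⟩ := hpar
  set N : ℕ := t.toNat - 1 with hN
  have hT : t.toNat = N + 1 := by omega
  set p : ℕ := ((x + t) / 2).toNat with hp
  set q : ℕ := ((t - x) / 2).toNat with hq
  have hp1 : 1 ≤ p := by omega
  have hq1 : 1 ≤ q := by omega
  have hpq : p + q = N + 1 := by omega
  have hxpq : x = (p:ℤ) - q := by omega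
  have hwP : (x + t)/2 - 1 = (p:ℤ) - 1 := by omega
  have hwQ : (t - x)/2 - 1 = (q:ℤ) - 1 := by omega
  set M : ℕ := ((t - |x|)/2).toNat with hM
  have hMmin : M = min p q := by
    rcases le_total p q with h | h
    · rw [min_eq_left h]; omega
    · rw [min_eq_right h]; omega
  have hMN : M ≤ N := by omega
  set w : ℝ := m * ε with hw
  set R : ℝ := (1 + m^2*ε^2) ^ (((1:ℝ) - (t:ℝ))/2) with hR
  set z : ℂ := -Complex.I * ((m:ℂ) * (ε:ℂ)) with hz
  set G : ℕ → ℕ := fun k => Fc p q true true k + Fc p q true false k with hG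
  have hGe : ∀ r : ℕ, G (2*r) = Ccomp p (r+1) * Ccomp q r := by
    intro r
    have h1 : (2*r) % 2 = 0 := by omega
    have h2 : 2*r/2 = r := by omega
    have h3 : (2*r+1)/2 = r := by omega
    rw [hG]
    simp [Fc, h1, h2, h3]
  have hGo : ∀ r : ℕ, G (2*r+1) = Ccomp p (r+1) * Ccomp q (r+1) := by
    intro r
    have h1 : (2*r+1) % 2 = 1 := by omega
    have h2 : (2*r+1)/2 = r := by omega
    have h3 : (2*r+1+1)/2 = r+1 := by omega
    rw [hG]
    simp [Fc, h1, h2, h3]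
  have hG0 : ∀ k, N + 1 ≤ k → G k = 0 := by
    intro k hk
    rcases Nat.even_or_odd k with ⟨r, hr⟩ | ⟨r, hr⟩
    · rw [show k = 2*r by omega, hGe]
      by_cases hrp : p ≤ r + 1 - 1
      · rw [Ccomp_eq_zero hp1 (by omega), zero_mul]
      · rw [Ccomp_eq_zero hq1 (by omega), mul_zero]
    · rw [show k = 2*r+1 by omega, hGo]
      by_cases hrp : p ≤ r
      · rw [Ccomp_eq_zero hp1 (by omega), zero_mul]
      · rw [Ccomp_eq_zero hq1 (by omega), mul_zero]
  have hSsum : (∑ d ∈ pathsTo x (N+1), z ^ turns d)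
      = ∑ k ∈ Finset.range (N+1), ((G k : ℕ) : ℂ) * z^k := by
    rw [sum_pathsTo N x (fun k => z^k)]
    apply Finset.sum_congr rfl
    intro k _
    congr 2
    rw [hxpq, cnt_closed N p q hpq true true k, cnt_closed N p q hpq true false k, hG]
  have hext : (∑ k ∈ Finset.range (N+1), ((G k:ℕ):ℂ) * z^k)
      = ∑ k ∈ Finset.range (2*(N+1)), ((G k:ℕ):ℂ) * z^k := by
    apply Finset.sum_subset
    · exact Finset.range_subset_range.mpr (by omega)
    · intro k hk1 hk2
      rw [Finset.mem_range] at hk2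
      rw [hG0 k (by omega)]
      simp
  have hz2 : z^2 = ((-(w^2) : ℝ) : ℂ) := by
    rw [hz, hw]
    push_cast
    rw [show (-Complex.I * ((m:ℂ) * (ε:ℂ)))^2 = Complex.I^2 * ((m:ℂ)*(ε:ℂ))^2 by ring,
      Complex.I_sq]
    ring
  have hzeven : ∀ r : ℕ, z^(2*r) = (((-1:ℝ)^r * w^(2*r) : ℝ) : ℂ) := by
    intro r
    rw [pow_mul, hz2, ← Complex.ofReal_pow]
    congr 1
    rw [neg_pow, pow_mul]
  have hzodd : ∀ r : ℕ, z^(2*r+1) = (((-1:ℝ)^r * w^(2*r+1) : ℝ) : ℂ) * (-Complex.I) := by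
    intro r
    rw [pow_succ, hzeven r, hz, hw]
    push_cast
    ring
  set Se : ℝ := ∑ r ∈ Finset.range (N+1), ((G (2*r) : ℕ):ℝ) * ((-1)^r * w^(2*r)) with hSe
  set So : ℝ := ∑ r ∈ Finset.range (N+1), ((G (2*r+1) : ℕ):ℝ) * ((-1)^r * w^(2*r+1)) with hSo
  have hS : (∑ d ∈ pathsTo x (N+1), z ^ turns d) = (Se:ℂ) + (So:ℂ) * (-Complex.I) := by
    rw [hSsum, hext, sum_range_two_mul (N+1) (fun k => ((G k:ℕ):ℂ) * z^k)]
    congr 1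
    · rw [hSe]
      push_cast
      apply Finset.sum_congr rfl
      intro r _
      rw [hzeven r]
      push_cast
      ring
    · rw [hSo]
      push_cast
      rw [Finset.sum_mul]
      apply Finset.sum_congr rfl
      intro r _
      rw [hzodd r]
      push_cast
      ring
  have hbase : ((1:ℂ) + (m:ℂ)^2 * (ε:ℂ)^2) ^ ((1 - (t:ℂ))/2) = ((R : ℝ) : ℂ) := by
    rw [hR, show ((1:ℂ) + (m:ℂ)^2*(ε:ℂ)^2) = (((1 + m^2*ε^2 : ℝ)) : ℂ) by push_cast; ring,
      show ((1 - (t:ℂ))/2) = ((((1:ℝ) - (t:ℝ))/2 : ℝ) : ℂ) by push_cast; ring,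
      Complex.ofReal_cpow (by positivity)]
  have ham : am x t m ε = ((R * So : ℝ):ℂ) + ((R * Se : ℝ):ℂ) * Complex.I := by
    unfold am
    rw [hT, ← hz]
    rw [hbase, hS]
    push_cast
    linear_combination (-(R:ℝ) * So : ℂ) * Complex.I_mul_I
  constructor
  · rw [ham]
    simp only [Complex.add_re, Complex.ofReal_re, Complex.mul_re, Complex.I_re, Complex.I_im,
      Complex.ofReal_im, mul_zero, mul_one, zero_mul, sub_zero, add_zero, zero_sub, neg_zero]
    rw [hSo]
    congr 1
    rw [Finset.sum_subset (Finset.range_subset_range.mpr (by omega : M + 1 ≤ N + 1))]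
    · apply Finset.sum_congr rfl
      intro r _
      simp only [intChoose, hwP, hwQ]
      rw [intChoose_cast p hp1 r, intChoose_cast q hq1 r, hGo r]
      push_cast
      ring
    · intro r hr1 hr2
      rw [Finset.mem_range] at hr1 hr2
      have hrM : M < r := by omega
      simp only [intChoose, hwP, hwQ]
      rw [intChoose_cast p hp1 r, intChoose_cast q hq1 r]
      rcases le_total p q with hpqle | hpqle
      · rw [Ccomp_eq_zero hp1 (by omega : p < r + 1)]
        simp
      · rw [Ccomp_eq_zero hq1 (by omega : q < r + 1)]
        simp
  · rw [ham]
    simp only [Complex.add_re, Complex.add_im, Complex.ofReal_re, Complex.mul_im, Complex.I_re,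
      Complex.I_im, Complex.ofReal_im, mul_zero, mul_one, zero_mul, add_zero, zero_add]
    rw [hSe]
    congr 1
    rw [Finset.sum_subset (show Finset.Icc 1 M ⊆ Finset.range (N+1) from by
      intro r hr
      rw [Finset.mem_Icc] at hr
      rw [Finset.mem_range]
      omega)]
    · apply Finset.sum_congr rfl
      intro r _
      simp only [intChoose, hwP, hwQ]
      rw [intChoose_cast p hp1 r, intChoose_cast' q hq1 r, hGe r]
      push_cast
      ring
    · intro r hr1 hr2
      rw [Finset.mem_range] at hr1
      rw [Finset.mem_Icc] at hr2
      simp only [intChoose, hwP, hwQ]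
      rw [intChoose_cast p hp1 r, intChoose_cast' q hq1 r]
      rcases Nat.eq_zero_or_pos r with hr0 | hr0
      · subst hr0
        rw [Ccomp_zero_right]
        simp only [if_neg (by omega : ¬ q = 0)]
        simp
      · have hrM : M < r := by omega
        rcases le_total p q with hpqle | hpqle
        · rw [Ccomp_eq_zero hp1 (by omega : p < r + 1)]
          simp
        · rw [Ccomp_eq_zero hq1 (by omega : q < r)]
          simp
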